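/- Let T : ℝ₊^K → ℝ₊₊^K be a standard interference mapping, let ‖·‖ be a monotone norm on ℝ^K, and let P > 0. Then the normalized mapping T̃(p) := (P / ‖T(p)‖) · T(p) has exactly one fixed point in ℝ₊₊^K. -/

import Mathlib

/-- `f` is a standard interference function on `ℝ₊^K`: strictly positive on the
nonnegative orthant, monotone w.r.t. the coordinatewise order, and scalable. -/
def IsStdIF {K : ℕ} (f : (Fin K → ℝ) → ℝ) : Prop :=
  (∀ p : Fin K → ℝ, (∀ i, 0 ≤ p i) → 0 < f p) ∧
  (∀ p q : Fin K → ℝ, (∀ i, 0 ≤ q i) → (∀ i, q i ≤ p i) → f q ≤ f p) ∧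
  (∀ p : Fin K → ℝ, (∀ i, 0 ≤ p i) → ∀ α : ℝ, 1 < α → f (α • p) < α * f p)


open Finset

/-- ratio sup -/
private noncomputable def sfn {K : ℕ} (hne : (Finset.univ : Finset (Fin K)).Nonempty)
    (x y : Fin K → ℝ) : ℝ := Finset.univ.sup' hne fun k => x k / y k

private lemma sfn_pos {K : ℕ} (hne : (Finset.univ : Finset (Fin K)).Nonempty)
    {x y : Fin K → ℝ} (hx : ∀ k, 0 < x k) (hy : ∀ k, 0 < y k) : 0 < sfn hne x y := by
  obtain ⟨k, -⟩ := hne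
  exact lt_of_lt_of_le (div_pos (hx k) (hy k))
    (Finset.le_sup' (fun k => x k / y k) (mem_univ k))

private lemma le_sfn_mul {K : ℕ} (hne : (Finset.univ : Finset (Fin K)).Nonempty)
    {x y : Fin K → ℝ} (hy : ∀ k, 0 < y k) (k : Fin K) : x k ≤ sfn hne x y * y k := by
  have h : x k / y k ≤ sfn hne x y := Finset.le_sup' (fun k => x k / y k) (mem_univ k)
  calc x k = x k / y k * y k := (div_mul_cancel₀ _ (hy k).ne').symm
    _ ≤ sfn hne x y * y k := mul_le_mul_of_nonneg_right h (hy k).le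

private lemma sfn_lt {K : ℕ} (hne : (Finset.univ : Finset (Fin K)).Nonempty)
    {x y : Fin K → ℝ} {a : ℝ} (hy : ∀ k, 0 < y k) (h : ∀ k, x k < a * y k) :
    sfn hne x y < a := by
  rw [sfn, Finset.sup'_lt_iff]
  exact fun k _ => (div_lt_iff₀ (hy k)).2 (h k)

private lemma sfn_le {K : ℕ} (hne : (Finset.univ : Finset (Fin K)).Nonempty)
    {x y : Fin K → ℝ} {a : ℝ} (hy : ∀ k, 0 < y k) (h : ∀ k, x k ≤ a * y k) :
    sfn hne x y ≤ a := by
  rw [sfn, Finset.sup'_le_iff]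
  exact fun k _ => (div_le_iff₀ (hy k)).2 (h k)

private lemma sfn_smul {K : ℕ} (hne : (Finset.univ : Finset (Fin K)).Nonempty)
    {x y : Fin K → ℝ} {c d : ℝ} (hc : 0 < c) (hd : 0 < d) :
    sfn hne (c • x) (d • y) = (c / d) * sfn hne x y := by
  rw [sfn, sfn]
  have h1 : (univ.sup' hne fun k => (c • x) k / (d • y) k)
      = univ.sup' hne ((fun r : ℝ => (c / d) * r) ∘ fun k => x k / y k) := by
    apply Finset.sup'_congr hne rfl
    intro k _
    simp only [Pi.smul_apply, smul_eq_mul, Function.comp_apply]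
    rw [mul_div_mul_comm]
  rw [h1, ← Finset.comp_sup'_eq_sup'_comp hne (fun r : ℝ => (c / d) * r)
    (fun u v => mul_max_of_nonneg u v (by positivity))]


private theorem stmt10_aux {K : ℕ} (T : (Fin K → ℝ) → (Fin K → ℝ))
    (hT : ∀ k : Fin K, (∀ p : Fin K → ℝ, (∀ i, 0 ≤ p i) → 0 < T p k) ∧
      (∀ p q : Fin K → ℝ, (∀ i, 0 ≤ q i) → (∀ i, q i ≤ p i) → T q k ≤ T p k) ∧
      (∀ p : Fin K → ℝ, (∀ i, 0 ≤ p i) → ∀ α : ℝ, 1 < α → T (α • p) k < α * T p k))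
    (ν : (Fin K → ℝ) → ℝ)
    (hν_pos : ∀ x : Fin K → ℝ, x ≠ 0 → 0 < ν x) (hν0 : ν 0 = 0)
    (hν_smul : ∀ (c : ℝ) (x : Fin K → ℝ), ν (c • x) = |c| * ν x)
    (hν_add : ∀ x y : Fin K → ℝ, ν (x + y) ≤ ν x + ν y)
    (hν_mono : ∀ x y : Fin K → ℝ, (∀ i, 0 ≤ x i) → (∀ i, x i ≤ y i) → ν x ≤ ν y)
    (P : ℝ) (hP : 0 < P) (hKpos : 0 < K) :
    ∃! p : Fin K → ℝ, (∀ i, 0 < p i) ∧ (P / ν (T p)) • T p = p := by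
  classical
  have hKne : Nonempty (Fin K) := ⟨⟨0, hKpos⟩⟩
  have hne : (Finset.univ : Finset (Fin K)).Nonempty := univ_nonempty
  have hTpos : ∀ p : Fin K → ℝ, (∀ i, 0 ≤ p i) → ∀ k, 0 < T p k :=
    fun p hp k => (hT k).1 p hp
  have hTmono : ∀ p q : Fin K → ℝ, (∀ i, 0 ≤ q i) → (∀ i, q i ≤ p i) → ∀ k, T q k ≤ T p k :=
    fun p q h1 h2 k => (hT k).2.1 p q h1 h2
  have hTscale : ∀ p : Fin K → ℝ, (∀ i, 0 ≤ p i) → ∀ α : ℝ, 1 < α → ∀ k,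
      T (α • p) k < α * T p k := fun p hp α hα k => (hT k).2.2 p hp α hα
  have hν_smul' : ∀ c : ℝ, 0 ≤ c → ∀ x : Fin K → ℝ, ν (c • x) = c * ν x := by
    intro c hc x; rw [hν_smul, abs_of_nonneg hc]
  have hνTpos : ∀ p : Fin K → ℝ, (∀ i, 0 ≤ p i) → 0 < ν (T p) := by
    intro p hp
    refine hν_pos _ fun h => ?_
    have h2 := hTpos p hp ⟨0, hKpos⟩
    rw [h] at h2
    exact lt_irrefl _ h2
  -- the normalized map
  set Tt : (Fin K → ℝ) → (Fin K → ℝ) := fun p => (P / ν (T p)) • T p with hTt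
  have hTtpos : ∀ p : Fin K → ℝ, (∀ i, 0 ≤ p i) → ∀ k, 0 < Tt p k := by
    intro p hp k
    exact mul_pos (div_pos hP (hνTpos p hp)) (hTpos p hp k)
  have hνTt : ∀ p : Fin K → ℝ, (∀ i, 0 ≤ p i) → ν (Tt p) = P := by
    intro p hp
    rw [hTt]
    rw [hν_smul' _ (div_nonneg hP.le (hνTpos p hp).le)]
    exact div_mul_cancel₀ _ (hνTpos p hp).ne'
  -- basis vectors and coordinate bound
  set sgl : Fin K → (Fin K → ℝ) := fun k => Pi.single k 1 with hsgldef
  have hsgl : ∀ k : Fin K, 0 < ν (sgl k) := by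
    intro k
    refine hν_pos _ fun h => ?_
    have := congrFun h k
    simp [hsgldef, Pi.single_eq_same] at this
  have hcoord : ∀ x : Fin K → ℝ, (∀ i, 0 ≤ x i) → ∀ k,
      x k * ν (sgl k) ≤ ν x := by
    intro x hx k
    have h1 : ν (x k • sgl k) ≤ ν x := by
      refine hν_mono _ _ ?_ ?_
      · intro i
        rcases eq_or_ne i k with rfl | hik
        · simp [hsgldef, Pi.single_eq_same]; exact hx i
        · simp [hsgldef, Pi.single_eq_of_ne hik]
      · intro i
        rcases eq_or_ne i k with rfl | hik
        · simp [hsgldef, Pi.single_eq_same]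
        · simp [hsgldef, Pi.single_eq_of_ne hik]; exact hx i
    rw [hν_smul' _ (hx k)] at h1
    exact h1
  -- bounds for the invariant compact set
  set m : ℝ := univ.inf' hne (fun k => ν (sgl k)) with hmdef
  have hm : 0 < m := by
    rw [hmdef, Finset.lt_inf'_iff]
    exact fun k _ => hsgl k
  have hmle : ∀ k, m ≤ ν (sgl k) := fun k => Finset.inf'_le _ (mem_univ k)
  set b : ℝ := P / m with hbdef
  have hb : 0 < b := div_pos hP hm
  have hub : ∀ x : Fin K → ℝ, (∀ i, 0 ≤ x i) → ν x = P → ∀ k, x k ≤ b := by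
    intro x hx hxP k
    have h1 : x k * ν (sgl k) ≤ P := hxP ▸ hcoord x hx k
    have h2 : x k ≤ P / ν (sgl k) := (le_div_iff₀ (hsgl k)).2 h1
    exact h2.trans (div_le_div_of_nonneg_left hP.le hm (hmle k))
  set C : ℝ := ν (T (fun _ => b)) with hCdef
  have hC : 0 < C := hνTpos _ (fun _ => hb.le)
  have hνTub : ∀ p : Fin K → ℝ, (∀ i, 0 ≤ p i) → ν p = P → ν (T p) ≤ C := by
    intro p hp hpP
    refine hν_mono _ _ (fun k => (hTpos p hp k).le) fun k => ?_
    exact hTmono _ p hp (fun i => hub p hp hpP i) k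
  set a : Fin K → ℝ := fun k => (P / C) * T 0 k with hadef
  have ha : ∀ k, 0 < a k := fun k =>
    mul_pos (div_pos hP hC) (hTpos 0 (fun _ => le_rfl) k)
  have hTt_lb : ∀ p : Fin K → ℝ, (∀ i, 0 ≤ p i) → ν p = P → ∀ k, a k ≤ Tt p k := by
    intro p hp hpP k
    have h1 : T 0 k ≤ T p k := hTmono p 0 (fun _ => le_rfl) hp k
    have h2 : P / C ≤ P / ν (T p) :=
      div_le_div_of_nonneg_left hP.le (hνTpos p hp) (hνTub p hp hpP)
    calc a k = (P / C) * T 0 k := rfl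
      _ ≤ (P / ν (T p)) * T p k :=
        mul_le_mul h2 h1 (hTpos 0 (fun _ => le_rfl) k).le
          (div_nonneg hP.le (hνTpos p hp).le)
      _ = Tt p k := rfl
  set X : Set (Fin K → ℝ) := {p | (∀ k, a k ≤ p k) ∧ ν p = P} with hXdef
  have hXpos : ∀ p ∈ X, ∀ k, 0 < p k := fun p hp k => lt_of_lt_of_le (ha k) (hp.1 k)
  have hXnn : ∀ p ∈ X, ∀ k, (0:ℝ) ≤ p k := fun p hp k => (hXpos p hp k).le
  have hmaps : ∀ p ∈ X, Tt p ∈ X := fun p hp =>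
    ⟨hTt_lb p (hXnn p hp) hp.2, hνTt p (hXnn p hp)⟩
  have hXne : X.Nonempty := by
    have h1 : ν (fun _ : Fin K => (1:ℝ)) > 0 := by
      refine hν_pos _ fun h => ?_
      have := congrFun h ⟨0, hKpos⟩
      simp at this
    set q0 : Fin K → ℝ := (P / ν (fun _ : Fin K => (1:ℝ))) • (fun _ : Fin K => (1:ℝ)) with hq0def
    have hq0nn : ∀ i, 0 ≤ q0 i := fun i => by
      simp only [hq0def, Pi.smul_apply, smul_eq_mul, mul_one]
      positivity
    have hq0P : ν q0 = P := by
      rw [hq0def, hν_smul' _ (by positivity)]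
      exact div_mul_cancel₀ _ h1.ne'
    exact ⟨Tt q0, hTt_lb q0 hq0nn hq0P, hνTt q0 hq0nn⟩
  -- the sup ratio is at least 1 on the ν-sphere
  have hSge1 : ∀ x y : Fin K → ℝ, (∀ k, 0 < x k) → (∀ k, 0 < y k) →
      ν x = P → ν y = P → 1 ≤ sfn hne x y := by
    intro x y hx hy hxP hyP
    by_contra h
    push_neg at h
    have hs : 0 < sfn hne x y := sfn_pos hne hx hy
    have h1 : ν x ≤ ν (sfn hne x y • y) := by
      refine hν_mono _ _ (fun k => (hx k).le) fun k => ?_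
      simpa using le_sfn_mul hne hy k
    rw [hν_smul' _ hs.le, hyP] at h1
    have : ν x < P := lt_of_le_of_lt h1 (by nlinarith)
    rw [hxP] at this
    exact lt_irrefl _ this
  -- key contraction step
  have hcontr : ∀ x y : Fin K → ℝ, (∀ k, 0 < x k) → (∀ k, 0 < y k) →
      ν x = P → ν y = P → x ≠ y →
      sfn hne (T x) (T y) * sfn hne (T y) (T x) < sfn hne x y * sfn hne y x := by
    intro x y hx hy hxP hyP hxy
    set α := sfn hne x y with hα
    set β := sfn hne y x with hβ
    have hα1 : 1 ≤ α := hSge1 x y hx hy hxP hyP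
    have hβ1 : 1 ≤ β := hSge1 y x hy hx hyP hxP
    have hxle : ∀ k, x k ≤ α * y k := fun k => le_sfn_mul hne hy k
    have hyle : ∀ k, y k ≤ β * x k := fun k => le_sfn_mul hne hx k
    have hTx : ∀ k, 0 < T x k := hTpos x fun i => (hx i).le
    have hTy : ∀ k, 0 < T y k := hTpos y fun i => (hy i).le
    have hSx : 0 < sfn hne (T x) (T y) := sfn_pos hne hTx hTy
    have hSy : 0 < sfn hne (T y) (T x) := sfn_pos hne hTy hTx
    have hkey : ∀ u v : Fin K → ℝ, (∀ k, 0 < u k) → (∀ k, 0 < v k) →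
        (∀ k, u k ≤ sfn hne u v * v k) → 1 < sfn hne u v →
        sfn hne (T u) (T v) < sfn hne u v := by
      intro u v hu hv hule hgt
      refine sfn_lt hne (hTpos v fun i => (hv i).le) fun k => ?_
      calc T u k ≤ T (sfn hne u v • v) k := by
            refine hTmono _ u (fun i => (hu i).le) (fun i => ?_) k
            simpa using hule i
        _ < sfn hne u v * T v k := hTscale v (fun i => (hv i).le) _ hgt k
    have hkey' : ∀ u v : Fin K → ℝ, (∀ k, 0 < u k) → (∀ k, 0 < v k) →
        (∀ k, u k ≤ v k) → sfn hne (T u) (T v) ≤ 1 := by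
      intro u v hu hv hule
      refine sfn_le hne (hTpos v fun i => (hv i).le) fun k => ?_
      rw [one_mul]
      exact hTmono v u (fun i => (hu i).le) hule k
    rcases eq_or_lt_of_le hα1 with hα2 | hα2 <;> rcases eq_or_lt_of_le hβ1 with hβ2 | hβ2
    · exfalso
      apply hxy
      funext k
      have h1 : x k ≤ y k := by have := hxle k; rw [← hα2] at this; linarith
      have h2 : y k ≤ x k := by have := hyle k; rw [← hβ2] at this; linarith
      linarith
    · have h1 : sfn hne (T x) (T y) ≤ 1 := by
        refine hkey' x y hx hy fun k => ?_
        have := hxle k; rw [← hα2] at this; linarith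
      have h2 : sfn hne (T y) (T x) < β := hkey y x hy hx hyle hβ2
      calc sfn hne (T x) (T y) * sfn hne (T y) (T x) ≤ 1 * sfn hne (T y) (T x) :=
            mul_le_mul_of_nonneg_right h1 hSy.le
        _ = sfn hne (T y) (T x) := one_mul _
        _ < β := h2
        _ = α * β := by rw [← hα2, one_mul]
    · have h1 : sfn hne (T y) (T x) ≤ 1 := by
        refine hkey' y x hy hx fun k => ?_
        have := hyle k; rw [← hβ2] at this; linarith
      have h2 : sfn hne (T x) (T y) < α := hkey x y hx hy hxle hα2
      calc sfn hne (T x) (T y) * sfn hne (T y) (T x) ≤ sfn hne (T x) (T y) * 1 :=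
            mul_le_mul_of_nonneg_left h1 hSx.le
        _ = sfn hne (T x) (T y) := mul_one _
        _ < α := h2
        _ = α * β := by rw [← hβ2, mul_one]
    · have h1 : sfn hne (T x) (T y) < α := hkey x y hx hy hxle hα2
      have h2 : sfn hne (T y) (T x) < β := hkey y x hy hx hyle hβ2
      exact mul_lt_mul'' h1 h2 hSx.le hSy.le
  -- contraction of the normalized map
  have hDTt : ∀ x y : Fin K → ℝ, (∀ k, 0 < x k) → (∀ k, 0 < y k) →
      ν x = P → ν y = P → x ≠ y →
      sfn hne (Tt x) (Tt y) * sfn hne (Tt y) (Tt x) < sfn hne x y * sfn hne y x := by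
    intro x y hx hy hxP hyP hxy
    have hcx : 0 < P / ν (T x) := div_pos hP (hνTpos x fun i => (hx i).le)
    have hcy : 0 < P / ν (T y) := div_pos hP (hνTpos y fun i => (hy i).le)
    have e1 : sfn hne (Tt x) (Tt y) = (P / ν (T x)) / (P / ν (T y)) * sfn hne (T x) (T y) :=
      sfn_smul hne hcx hcy
    have e2 : sfn hne (Tt y) (Tt x) = (P / ν (T y)) / (P / ν (T x)) * sfn hne (T y) (T x) :=
      sfn_smul hne hcy hcx
    have e3 : sfn hne (Tt x) (Tt y) * sfn hne (Tt y) (Tt x)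
        = sfn hne (T x) (T y) * sfn hne (T y) (T x) := by
      rw [e1, e2]
      have h4 : (P / ν (T x)) / (P / ν (T y)) * ((P / ν (T y)) / (P / ν (T x))) = 1 := by
        have n1 : ν (T x) ≠ 0 := (hνTpos x fun i => (hx i).le).ne'
        have n2 : ν (T y) ≠ 0 := (hνTpos y fun i => (hy i).le).ne'
        field_simp
      calc (P / ν (T x)) / (P / ν (T y)) * sfn hne (T x) (T y)
            * ((P / ν (T y)) / (P / ν (T x)) * sfn hne (T y) (T x))
          = ((P / ν (T x)) / (P / ν (T y)) * ((P / ν (T y)) / (P / ν (T x))))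
            * (sfn hne (T x) (T y) * sfn hne (T y) (T x)) := by ring
        _ = sfn hne (T x) (T y) * sfn hne (T y) (T x) := by rw [h4, one_mul]
    rw [e3]
    exact hcontr x y hx hy hxP hyP hxy
  -- continuity of ν
  have hνdecomp : ∀ z : Fin K → ℝ, ν z ≤ ∑ i, |z i| * ν (sgl i) := by
    intro z
    have hsum : ∀ s : Finset (Fin K),
        ν (∑ i ∈ s, z i • sgl i) ≤ ∑ i ∈ s, |z i| * ν (sgl i) := by
      intro s
      induction s using Finset.cons_induction with
      | empty => simp [hν0]
      | cons j s hj ih =>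
        rw [Finset.sum_cons, Finset.sum_cons]
        refine le_trans (hν_add _ _) (add_le_add ?_ ih)
        rw [hν_smul]
    have hz : z = ∑ i, z i • sgl i := by
      funext j
      rw [Finset.sum_apply]
      simp [hsgldef, Pi.single_apply]
    calc ν z = ν (∑ i, z i • sgl i) := by rw [← hz]
      _ ≤ _ := hsum univ
  have hL0 : 0 ≤ ∑ i, ν (sgl i) := Finset.sum_nonneg fun i _ => (hsgl i).le
  have hνsub : ∀ x y : Fin K → ℝ, |ν x - ν y| ≤ ν (x - y) := by
    intro x y
    rw [abs_sub_le_iff]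
    constructor
    · have h1 := hν_add y (x - y)
      have e : y + (x - y) = x := by abel
      rw [e] at h1
      linarith
    · have h1 := hν_add x (y - x)
      have e : x + (y - x) = y := by abel
      rw [e] at h1
      have h3 : ν (y - x) = ν (x - y) := by
        have e2 : y - x = (-1 : ℝ) • (x - y) := by
          funext i
          simp only [Pi.sub_apply, Pi.smul_apply, smul_eq_mul]
          ring
        rw [e2, hν_smul]; simp
      linarith
  have hνcont : Continuous ν := by
    have hlip : LipschitzWith ⟨∑ i, ν (sgl i), hL0⟩ ν := by
      refine LipschitzWith.of_dist_le_mul fun x y => ?_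
      rw [Real.dist_eq]
      calc |ν x - ν y| ≤ ν (x - y) := hνsub x y
        _ ≤ ∑ i, |x i - y i| * ν (sgl i) := hνdecomp _
        _ ≤ ∑ i, dist x y * ν (sgl i) := by
            refine Finset.sum_le_sum fun i _ => mul_le_mul_of_nonneg_right ?_ (hsgl i).le
            rw [← Real.dist_eq]
            exact dist_le_pi_dist x y i
        _ = (∑ i, ν (sgl i)) * dist x y := by rw [← Finset.mul_sum, mul_comm]
    exact hlip.continuous
  -- continuity of each coordinate of T at strictly positive points
  have hTcont : ∀ p : Fin K → ℝ, (∀ i, 0 < p i) → ∀ k, ContinuousAt (fun q => T q k) p := by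
    intro p hp k
    rw [Metric.continuousAt_iff]
    intro ε hε
    have hfp : 0 < T p k := hTpos p (fun i => (hp i).le) k
    set m' : ℝ := univ.inf' hne p with hm'def
    have hm' : 0 < m' := by rw [hm'def, Finset.lt_inf'_iff]; exact fun i _ => hp i
    have hm'le : ∀ i, m' ≤ p i := fun i => Finset.inf'_le _ (mem_univ i)
    set α : ℝ := 1 + min 1 (ε / (2 * T p k)) with hαdef
    have hα : 1 < α := by
      have : 0 < min 1 (ε / (2 * T p k)) := lt_min one_pos (by positivity)
      rw [hαdef]; linarith
    have hα2 : α ≤ 2 := by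
      have : min 1 (ε / (2 * T p k)) ≤ 1 := min_le_left _ _
      rw [hαdef]; linarith
    have hα0 : α ≠ 0 := by linarith
    have hαfp : (α - 1) * T p k ≤ ε / 2 := by
      have h1 : α - 1 ≤ ε / (2 * T p k) := by rw [hαdef]; simpa using min_le_right _ _
      calc (α - 1) * T p k ≤ ε / (2 * T p k) * T p k :=
            mul_le_mul_of_nonneg_right h1 hfp.le
        _ = ε / 2 := by field_simp
    set δ : ℝ := (α - 1) * m' / α with hδdef
    have hδ : 0 < δ := div_pos (by nlinarith) (by linarith)
    refine ⟨δ, hδ, ?_⟩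
    intro q hq
    have hqi : ∀ i, |q i - p i| < δ := fun i => by
      rw [← Real.dist_eq]; exact lt_of_le_of_lt (dist_le_pi_dist q p i) hq
    have hδ1 : δ ≤ (α - 1) * m' := div_le_self (by nlinarith) (by linarith)
    have hδm : δ < m' := by
      rw [hδdef, div_lt_iff₀ (by linarith)]
      nlinarith
    have hq0 : ∀ i, 0 ≤ q i := by
      intro i
      have h1 := (abs_lt.1 (hqi i)).1
      have h2 := hm'le i
      linarith
    have hqle : ∀ i, q i ≤ α * p i := by
      intro i
      have h1 := (abs_lt.1 (hqi i)).2
      have h2 : (α - 1) * m' ≤ (α - 1) * p i :=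
        mul_le_mul_of_nonneg_left (hm'le i) (by linarith)
      have e : α * p i = p i + (α - 1) * p i := by ring
      linarith
    have hple : ∀ i, p i ≤ α * q i := by
      intro i
      have h1 := (abs_lt.1 (hqi i)).1
      have h2 : m' - δ ≤ q i := by linarith [hm'le i]
      have h3 : (α - 1) * (m' - δ) = δ := by
        rw [hδdef]; field_simp; ring
      have h4 : (α - 1) * (m' - δ) ≤ (α - 1) * q i :=
        mul_le_mul_of_nonneg_left h2 (by linarith)
      have e : α * q i = q i + (α - 1) * q i := by ring
      linarith
    have h1 : T q k < α * T p k := by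
      calc T q k ≤ T (α • p) k := by
            refine hTmono _ q hq0 (fun i => ?_) k
            simpa using hqle i
        _ < α * T p k := hTscale p (fun i => (hp i).le) α hα k
    have h2 : T p k < α * T q k := by
      calc T p k ≤ T (α • q) k := by
            refine hTmono _ p (fun i => (hp i).le) (fun i => ?_) k
            simpa using hple i
        _ < α * T q k := hTscale q hq0 α hα k
    have hTq : 0 < T q k := hTpos q hq0 k
    have h6 : α * T p k ≤ 2 * T p k := mul_le_mul_of_nonneg_right hα2 hfp.le
    have h7 : T q k ≤ 2 * T p k := le_of_lt (lt_of_lt_of_le h1 h6)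
    have h8 : (α - 1) * T q k ≤ (α - 1) * (2 * T p k) :=
      mul_le_mul_of_nonneg_left h7 (by linarith)
    have e2 : (α - 1) * (2 * T p k) = 2 * ((α - 1) * T p k) := by ring
    have e3 : α * T q k = T q k + (α - 1) * T q k := by ring
    have e4 : α * T p k = T p k + (α - 1) * T p k := by ring
    rw [Real.dist_eq, abs_lt]
    clear_value α δ m'
    constructor
    · linarith only [h2, e3, h8, e2, hαfp, hε]
    · linarith only [h1, e4, hαfp, hε]
  -- continuity of the normalized map at positive points
  have hTtcont : ∀ p : Fin K → ℝ, (∀ i, 0 < p i) → ContinuousAt Tt p := by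
    intro p hp
    have hTc : ContinuousAt T p := continuousAt_pi.2 fun k => hTcont p hp k
    have hνT : ContinuousAt (fun q => ν (T q)) p := (hνcont.continuousAt).comp hTc
    apply continuousAt_pi.2
    intro k
    have hc : ContinuousAt (fun q => (P / ν (T q)) * T q k) p :=
      (continuousAt_const.div hνT (hνTpos p fun i => (hp i).le).ne').mul (hTcont p hp k)
    exact hc
  -- the functional to minimize
  set F : (Fin K → ℝ) → ℝ := fun p => sfn hne p (Tt p) * sfn hne (Tt p) p with hFdef
  have hFcont : ∀ p ∈ X, ContinuousAt F p := by
    intro p hpX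
    have hp := hXpos p hpX
    have hTtc := hTtcont p hp
    have hTtk : ∀ k, ContinuousAt (fun q => Tt q k) p :=
      fun k => (continuousAt_apply k (Tt p)).comp hTtc
    have hTtkpos : ∀ k, 0 < Tt p k := hTtpos p fun i => (hp i).le
    have c1 : ContinuousAt (fun q => sfn hne q (Tt q)) p :=
      ContinuousAt.finset_sup'_apply hne fun k _ =>
        (continuousAt_apply k p).div (hTtk k) (hTtkpos k).ne'
    have c2 : ContinuousAt (fun q => sfn hne (Tt q) q) p :=
      ContinuousAt.finset_sup'_apply hne fun k _ =>
        (hTtk k).div (continuousAt_apply k p) (hp k).ne'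
    exact c1.mul c2
  -- X is compact
  have hXclosed : IsClosed X := by
    have h1 : IsClosed {p : Fin K → ℝ | ∀ k, a k ≤ p k} := by
      have e : {p : Fin K → ℝ | ∀ k, a k ≤ p k} = ⋂ k, {p | a k ≤ p k} := by
        ext p; simp
      rw [e]
      exact isClosed_iInter fun k => isClosed_le continuous_const (continuous_apply k)
    have h2 : IsClosed {p : Fin K → ℝ | ν p = P} := isClosed_eq hνcont continuous_const
    exact h1.inter h2
  have hXcompact : IsCompact X := by
    refine IsCompact.of_isClosed_subset
      (isCompact_univ_pi fun k => isCompact_Icc (a := a k) (b := b)) hXclosed ?_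
    intro p hpX
    rw [Set.mem_univ_pi]
    exact fun k => ⟨hpX.1 k, hub p (hXnn p hpX) hpX.2 k⟩
  obtain ⟨p, hpX, hpmin⟩ :=
    hXcompact.exists_isMinOn hXne fun q hq => (hFcont q hq).continuousWithinAt
  have hppos := hXpos p hpX
  have hfix : Tt p = p := by
    by_contra hneq
    have hTtpX := hmaps p hpX
    have hlt : F (Tt p) < F p :=
      hDTt p (Tt p) hppos (hXpos _ hTtpX) hpX.2 hTtpX.2 (fun h => hneq h.symm)
    exact absurd (hpmin hTtpX) (not_le.2 hlt)
  refine ⟨p, ⟨hppos, hfix⟩, ?_⟩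
  rintro q ⟨hqpos, hqfix⟩
  have hqfix' : Tt q = q := hqfix
  by_contra hqp
  have hq0 : ∀ i, 0 ≤ q i := fun i => (hqpos i).le
  have hνq : ν q = P := by rw [← hqfix']; exact hνTt q hq0
  have hlt := hDTt q p hqpos hppos hνq hpX.2 hqp
  rw [hqfix', hfix] at hlt
  exact lt_irrefl _ hlt


theorem stmt10 {K : ℕ} (T : (Fin K → ℝ) → (Fin K → ℝ))
    (hT : ∀ k : Fin K, IsStdIF (fun p => T p k))
    (ν : (Fin K → ℝ) → ℝ)
    (hν_pos : ∀ x : Fin K → ℝ, x ≠ 0 → 0 < ν x) (hν0 : ν 0 = 0)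
    (hν_smul : ∀ (c : ℝ) (x : Fin K → ℝ), ν (c • x) = |c| * ν x)
    (hν_add : ∀ x y : Fin K → ℝ, ν (x + y) ≤ ν x + ν y)
    (hν_mono : ∀ x y : Fin K → ℝ, (∀ i, 0 ≤ x i) → (∀ i, x i ≤ y i) → ν x ≤ ν y)
    (P : ℝ) (hP : 0 < P) :
    ∃! p : Fin K → ℝ, (∀ i, 0 < p i) ∧ (P / ν (T p)) • T p = p := by
  rcases Nat.eq_zero_or_pos K with hK0 | hKpos
  · subst hK0
    refine ⟨0, ⟨fun i => i.elim0, ?_⟩, fun q _ => funext fun i => i.elim0⟩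
    have h0 : T 0 = 0 := funext fun i => i.elim0
    rw [h0, smul_zero]
  · exact stmt10_aux T (fun k => ⟨(hT k).1, (hT k).2.1, (hT k).2.2⟩) ν hν_pos hν0 hν_smul
      hν_add hν_mono P hP hKpos
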